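/- Let P be an anti-self-polar polytope of dimension d + 1. Then f₀d(P) = 2·e(G(P)), where e(G(P)) is the number of edges of the diameter graph G(P). In particular, if (v, w) is a pair of vertices of P at maximal distance, then w is a vertex of the facet of P opposite v, and each such pair is counted twice in f₀d(P). -/

import Mathlib

open scoped RealInnerProductSpace Pointwise

variable {E : Type*} [NormedAddCommGroup E] [InnerProductSpace ℝ E]

/-- A (convex) polytope: the convex hull of a finite set. -/
def IsPolytope (P : Set E) : Prop := ∃ S : Finset E, P = convexHull ℝ (S : Set E)

/-- The polar of a set with respect to the unit sphere. -/
def polarSet (P : Set E) : Set E := {y | ∀ x ∈ P, (inner ℝ x y : ℝ) ≤ 1}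

/-- The dimension of a set: the rank of the direction of its affine span. -/
noncomputable def affDim (F : Set E) : ℕ := Module.finrank ℝ (affineSpan ℝ F).direction

/-- `F` is a nonempty (exposed) face of `P` of dimension `i`. -/
def IsFaceOfDim (P F : Set E) (i : ℕ) : Prop :=
  IsExposed ℝ P F ∧ F.Nonempty ∧ affDim F = i

/-- `fVec P i` is the number of `i`-dimensional faces of `P`. -/
noncomputable def fVec (P : Set E) (i : ℕ) : ℕ := {F : Set E | IsFaceOfDim P F i}.ncard

/-- `fPair P i j` is the number of pairs `x ⊆ y` with `x` an `i`-face and `y` a `j`-face. -/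
noncomputable def fPair (P : Set E) (i j : ℕ) : ℕ :=
  {p : Set E × Set E | IsFaceOfDim P p.1 i ∧ IsFaceOfDim P p.2 j ∧ p.1 ⊆ p.2}.ncard

/-- Anti-self-polar: inscribed in the unit sphere and `P* = -c • P` for some `c > 0`. -/
def IsAntiSelfPolar (P : Set E) : Prop :=
  (∀ v ∈ Set.extremePoints ℝ P, ‖v‖ = 1) ∧ ∃ c : ℝ, 0 < c ∧ polarSet P = (-c) • P

/-- The edge set of the diameter graph of `P`: unordered pairs of vertices of `P`
at maximal (= diameter) Euclidean distance. -/
def diamEdges (P : Set E) : Set (Set E) :=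
  {e | ∃ v w, v ∈ Set.extremePoints ℝ P ∧ w ∈ Set.extremePoints ℝ P ∧ v ≠ w ∧
    dist v w = Metric.diam P ∧ e = {v, w}}

/-- `aGon P j` is the number of 2-dimensional faces of `P` that are `j`-gons. -/
noncomputable def aGon (P : Set E) (j : ℕ) : ℕ :=
  {F : Set E | IsFaceOfDim P F 2 ∧ (Set.extremePoints ℝ F).ncard = j}.ncard

/-- The sum `a⁴(P) + 2·a⁵(P) + 3·a⁶(P) + ⋯`. -/
noncomputable def excessSum (P : Set E) : ℕ := ∑ᶠ j : ℕ, (j - 3) * aGon P j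

/-- The gap `g₂(P)` in Kalai's inequality. -/
noncomputable def g2 (P : Set E) : ℤ :=
  (excessSum P : ℤ) - (4 * (fVec P 0 : ℤ) - (fVec P 1 : ℤ) - 10)

namespace ASPaux

open Set Module

structure Ctx (P V : Set E) (c : ℝ) : Prop where
  hV : V = Set.extremePoints ℝ P
  fin : V.Finite
  hull : P = convexHull ℝ V
  norm1 : ∀ v ∈ V, ‖v‖ = 1
  cpos : 0 < c
  polar : polarSet P = (-c) • P

variable {P V : Set E} {c : ℝ}

theorem Ctx.subsetP (h : Ctx P V c) : V ⊆ P := h.hull ▸ subset_convexHull ℝ V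

theorem Ctx.convexP (h : Ctx P V c) : Convex ℝ P := h.hull ▸ convex_convexHull ℝ V

theorem Ctx.compactP (h : Ctx P V c) : IsCompact P := h.hull ▸ h.fin.isCompact_convexHull ℝ

theorem Ctx.closedP (h : Ctx P V c) : IsClosed P := h.compactP.isClosed

theorem Ctx.zero_mem (h : Ctx P V c) : (0 : E) ∈ P := by
  have h0 : (0 : E) ∈ polarSet P := by
    intro x hx; simp
  rw [h.polar] at h0
  obtain ⟨z, hz, hzz⟩ := h0
  have : z = 0 := by
    have hc : (-c : ℝ) ≠ 0 := by nlinarith [h.cpos]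
    rcases (by simpa using hzz : c = 0 ∨ z = 0) with h' | h'
    · exact absurd h' (ne_of_gt h.cpos)
    · exact h'
  rwa [this] at hz

/-- The inner product of two points of `P` is at least `-(1/c)`. -/
theorem Ctx.inner_ge (h : Ctx P V c) {x y : E} (hx : x ∈ P) (hy : y ∈ P) :
    -(1/c) ≤ ⟪x, y⟫ := by
  have h1 : (-c) • y ∈ polarSet P := by
    rw [h.polar]; exact Set.smul_mem_smul_set hy
  have h2 : (inner ℝ x ((-c) • y) : ℝ) ≤ 1 := h1 x hx
  rw [real_inner_smul_right] at h2
  rw [neg_le, le_div_iff₀ h.cpos]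
  nlinarith [h2]


/-- Lower halfspace bound propagates from a set to its convex hull. -/
theorem inner_ge_hull {W : Set E} {y : E} {a : ℝ} (hw : ∀ w ∈ W, a ≤ ⟪y, w⟫)
    {z : E} (hz : z ∈ convexHull ℝ W) : a ≤ ⟪y, z⟫ := by
  have hconv : Convex ℝ {z : E | a ≤ ⟪y, z⟫} :=
    convex_halfSpace_ge (innerSL ℝ y).toLinearMap.isLinear a
  exact convexHull_min hw hconv hz

theorem inner_le_hull {W : Set E} {y : E} {a : ℝ} (hw : ∀ w ∈ W, ⟪y, w⟫ ≤ a)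
    {z : E} (hz : z ∈ convexHull ℝ W) : ⟪y, z⟫ ≤ a := by
  have hconv : Convex ℝ {z : E | ⟪y, z⟫ ≤ a} :=
    convex_halfSpace_le (innerSL ℝ y).toLinearMap.isLinear a
  exact convexHull_min hw hconv hz

theorem Ctx.norm_le_one (h : Ctx P V c) {x : E} (hx : x ∈ P) : ‖x‖ ≤ 1 := by
  have : P ⊆ Metric.closedBall (0 : E) 1 := by
    rw [h.hull]
    refine convexHull_min (fun w hw => ?_) (convex_closedBall _ _)
    simp [Metric.mem_closedBall, dist_eq_norm, h.norm1 w hw]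
  simpa [Metric.mem_closedBall, dist_eq_norm] using this hx

/-- Inscribed in the sphere: `⟪v, x⟫ ≤ 1` for a vertex `v` and any `x ∈ P`. -/
theorem Ctx.inner_le_one (h : Ctx P V c) {v x : E} (hv : v ∈ V) (hx : x ∈ P) :
    ⟪v, x⟫ ≤ 1 := by
  calc ⟪v, x⟫ ≤ ‖v‖ * ‖x‖ := real_inner_le_norm v x
  _ ≤ 1 := by rw [h.norm1 v hv]; simpa using h.norm_le_one hx


variable [FiniteDimensional ℝ E]

/-- The key exterior description: `P` is the intersection of the halfspaces
`⟪w, ·⟫ ≥ -(1/c)` over vertices `w`. -/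
theorem Ctx.mem_iff (h : Ctx P V c) {x : E} :
    x ∈ P ↔ ∀ w ∈ V, -(1/c) ≤ ⟪w, x⟫ := by
  constructor
  · intro hx w hw
    exact h.inner_ge (h.subsetP hw) hx
  · intro hx
    by_contra hxP
    have hPz : ∀ z ∈ P, -(1/c) ≤ ⟪x, z⟫ := by
      intro z hz
      rw [h.hull] at hz
      exact inner_ge_hull (fun w hw => (real_inner_comm w x) ▸ hx w hw) hz
    obtain ⟨f, u, hfP, hfx⟩ := geometric_hahn_banach_closed_point h.convexP h.closedP hxP
    have hu0 : 0 < u := by simpa using hfP 0 h.zero_mem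
    set g : E := (InnerProductSpace.toDual ℝ E).symm f with hg
    have hgf : ∀ z : E, ⟪g, z⟫ = f z := fun z => InnerProductSpace.toDual_symm_apply
    set y : E := u⁻¹ • g with hy
    have hyP : y ∈ polarSet P := by
      intro z hz
      have : f z < u := hfP z hz
      have : ⟪z, y⟫ = u⁻¹ * f z := by
        rw [real_inner_comm, hy, real_inner_smul_left, hgf]
      rw [this]
      rw [inv_mul_le_iff₀ hu0]
      linarith [hfP z hz]
    rw [h.polar] at hyP
    obtain ⟨z₀, hz₀, hz₀y⟩ := hyP
    have h1 : ⟪x, y⟫ = -c * ⟪x, z₀⟫ := by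
      rw [← hz₀y, real_inner_smul_right]
    have h2 : ⟪x, y⟫ = u⁻¹ * f x := by
      rw [hy, real_inner_smul_right, real_inner_comm, hgf]
    have h3 : (1 : ℝ) < ⟪x, y⟫ := by
      rw [h2, lt_inv_mul_iff₀ hu0]
      simpa using hfx
    have h4 : ⟪x, y⟫ ≤ 1 := by
      rw [h1]
      have := hPz z₀ hz₀
      rw [neg_le, le_div_iff₀ h.cpos] at this
      nlinarith [h.cpos]
    linarith


theorem Ctx.V_nonempty (h : Ctx P V c) : V.Nonempty := by
  rcases Set.eq_empty_or_nonempty V with hV | hV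
  · exfalso
    have := h.zero_mem
    rw [h.hull, hV] at this
    simpa using this
  · exact hV

theorem Ctx.ne_of_mem (h : Ctx P V c) {v : E} (hv : v ∈ V) : v ≠ 0 := by
  intro h0
  have := h.norm1 v hv
  rw [h0] at this
  simp at this

/-- Every vertex has an "antipodal" vertex: `⟪v, w⟫ = -(1/c)`. -/
theorem Ctx.exists_antipodal (h : Ctx P V c) {v : E} (hv : v ∈ V) :
    ∃ w ∈ V, ⟪v, w⟫ = -(1/c) := by
  obtain ⟨w, hwV, hwmin⟩ :=
    h.fin.toFinset.exists_min_image (fun w => ⟪v, w⟫)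
      (by simpa [Set.Finite.toFinset_nonempty] using h.V_nonempty)
  rw [Set.Finite.mem_toFinset] at hwV
  refine ⟨w, hwV, ?_⟩
  set m : ℝ := ⟪v, w⟫ with hm
  have hmge : -(1/c) ≤ m := h.inner_ge (h.subsetP hv) (h.subsetP hwV)
  have hminP : ∀ x ∈ P, m ≤ ⟪v, x⟫ := by
    intro x hx
    rw [h.hull] at hx
    exact inner_ge_hull (fun w' hw' => hwmin w' (h.fin.mem_toFinset.2 hw')) hx
  have hmle : m ≤ 0 := by simpa using hminP 0 h.zero_mem
  by_contra hne
  have hmgt : -(1/c) < m := lt_of_le_of_ne hmge (Ne.symm hne)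
  -- the auxiliary scale factor
  set t : ℝ := 2*c/(1 + c*(-m)) with ht
  have hden : 0 < 1 + c*(-m) := by nlinarith [h.cpos]
  have htpos : 0 < t := div_pos (by nlinarith [h.cpos]) hden
  have hcm : c * (-m) < 1 := by
    have h1 : -m < 1/c := by linarith
    calc c * (-m) < c * (1/c) := mul_lt_mul_of_pos_left h1 h.cpos
    _ = 1 := by rw [mul_one_div, div_self (ne_of_gt h.cpos)]
  have htc : c < t := by
    rw [ht, lt_div_iff₀ hden]
    nlinarith [hcm, h.cpos]
  have htm : t * (-m) ≤ 1 := by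
    rw [ht, div_mul_eq_mul_div, div_le_one hden]
    nlinarith [hcm]
  have hy : (-t) • v ∈ polarSet P := by
    intro x hx
    have h1 : m ≤ ⟪v, x⟫ := hminP x hx
    have : (inner ℝ x ((-t) • v) : ℝ) = -t * ⟪v, x⟫ := by
      rw [real_inner_smul_right, real_inner_comm]
    rw [this]
    nlinarith [htpos]
  rw [h.polar] at hy
  obtain ⟨z, hz, hzy⟩ := hy
  have hzv : z = (t/c) • v := by
    have hcne : (-c : ℝ) ≠ 0 := by nlinarith [h.cpos]
    have := congrArg (fun q => (-c)⁻¹ • q) hzy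
    simp only [smul_smul, inv_mul_cancel₀ hcne, one_smul] at this
    rw [this]
    congr 1
    field_simp
  have : ⟪v, z⟫ = t/c := by
    rw [hzv, real_inner_smul_right, real_inner_self_eq_norm_sq, h.norm1 v hv]
    ring
  have hle := h.inner_le_one hv hz
  rw [this] at hle
  rw [div_le_one h.cpos] at hle
  linarith


variable (P c) in
/-- The facet of `P` opposite the vertex `v`. -/
def Fface (v : E) : Set E := {x ∈ P | ⟪v, x⟫ = -(1/c)}

theorem Ctx.Fface_nonempty (h : Ctx P V c) {v : E} (hv : v ∈ V) :
    (Fface P c v).Nonempty := by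
  obtain ⟨w, hwV, hw⟩ := h.exists_antipodal hv
  exact ⟨w, h.subsetP hwV, hw⟩

theorem Ctx.Fface_isExposed (h : Ctx P V c) {v : E} (hv : v ∈ V) :
    IsExposed ℝ P (Fface P c v) := by
  intro _
  refine ⟨-(innerSL ℝ v), ?_⟩
  ext x
  simp only [Fface, Set.mem_setOf_eq, ContinuousLinearMap.neg_apply, coe_innerSL_apply,
    innerSL_apply_apply]
  constructor
  · rintro ⟨hxP, hxv⟩
    refine ⟨hxP, fun y hy => ?_⟩
    have := h.inner_ge (h.subsetP hv) hy
    rw [hxv]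
    linarith
  · rintro ⟨hxP, hmax⟩
    refine ⟨hxP, ?_⟩
    obtain ⟨w, hwV, hw⟩ := h.exists_antipodal hv
    have h1 := hmax w (h.subsetP hwV)
    rw [hw] at h1
    have h2 := h.inner_ge (h.subsetP hv) hxP
    linarith

/-- Strict separation of a vertex from the other vertices and the origin. -/
theorem Ctx.exists_sep (h : Ctx P V c) {v : E} (hv : v ∈ V) :
    ∃ u : E, ∀ x ∈ convexHull ℝ ((V \ {v}) ∪ {0}), ⟪u, x⟫ < ⟪u, v⟫ := by
  set C : Set E := convexHull ℝ ((V \ {v}) ∪ {0}) with hC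
  have hCsub : (V \ {v}) ∪ {0} ⊆ P \ {v} := by
    rintro x (⟨hxV, hxv⟩ | hx0)
    · exact ⟨h.subsetP hxV, hxv⟩
    · rw [Set.mem_singleton_iff] at hx0
      subst hx0
      refine ⟨h.zero_mem, ?_⟩
      simp only [Set.mem_singleton_iff]
      exact fun h0 => h.ne_of_mem hv h0.symm
  have hvex : v ∈ Set.extremePoints ℝ P := h.hV ▸ hv
  have hvC : v ∉ C := by
    intro hvC
    have := (h.convexP.mem_extremePoints_iff_mem_diff_convexHull_diff).1 hvex
    exact this.2 (convexHull_mono hCsub hvC)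
  have hCconv : Convex ℝ C := convex_convexHull ℝ _
  have hCclosed : IsClosed C := by
    have : ((V \ {v}) ∪ {0} : Set E).Finite := h.fin.diff.union (Set.finite_singleton 0)
    exact (this.isCompact_convexHull ℝ).isClosed
  obtain ⟨f, u₀, hfC, hfv⟩ := geometric_hahn_banach_closed_point hCconv hCclosed hvC
  set g : E := (InnerProductSpace.toDual ℝ E).symm f with hg
  have hgf : ∀ z : E, ⟪g, z⟫ = f z := fun z => InnerProductSpace.toDual_symm_apply
  exact ⟨g, fun x hx => by rw [hgf, hgf]; exact lt_trans (hfC x hx) hfv⟩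

/-- A point of the opposite facet where all other vertex constraints are strict. -/
theorem Ctx.exists_strict_point (h : Ctx P V c) {v : E} (hv : v ∈ V) :
    ∃ p ∈ Fface P c v, ∀ w ∈ V, w ≠ v → -(1/c) < ⟪w, p⟫ := by
  obtain ⟨u, hu⟩ := h.exists_sep hv
  have h0C : (0 : E) ∈ convexHull ℝ ((V \ {v}) ∪ {0}) :=
    subset_convexHull ℝ _ (Set.mem_union_right _ rfl)
  have ha : 0 < ⟪u, v⟫ := by
    have := hu 0 h0C
    simpa using this
  set a : ℝ := ⟪u, v⟫ with hadef
  set p : E := (-(1/(c*a))) • u with hp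
  have hcane : c * a ≠ 0 := mul_ne_zero (ne_of_gt h.cpos) (ne_of_gt ha)
  have hvp : ⟪v, p⟫ = -(1/c) := by
    rw [hp, real_inner_smul_right, real_inner_comm, ← hadef]
    field_simp [ne_of_gt ha, ne_of_gt h.cpos]
  have hwp : ∀ w ∈ V, w ≠ v → -(1/c) < ⟪w, p⟫ := by
    intro w hwV hwv
    have hwC : w ∈ convexHull ℝ ((V \ {v}) ∪ {0}) :=
      subset_convexHull ℝ _ (Set.mem_union_left _ ⟨hwV, hwv⟩)
    have h1 : ⟪u, w⟫ < a := hu w hwC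
    have h2 : ⟪w, p⟫ = -(1/(c*a)) * ⟪u, w⟫ := by
      rw [hp, real_inner_smul_right, real_inner_comm]
    rw [h2]
    have h3 : -(1/c) = -(1/(c*a)) * a := by
      field_simp
    rw [h3]
    have hneg : -(1/(c*a)) < 0 := by
      have : 0 < 1/(c*a) := one_div_pos.2 (mul_pos h.cpos ha)
      linarith
    exact (mul_lt_mul_left_of_neg hneg).2 h1
  have hpP : p ∈ P := by
    rw [h.mem_iff]
    intro w hwV
    by_cases hwv : w = v
    · subst hwv; rw [hvp]
    · exact le_of_lt (hwp w hwV hwv)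
  exact ⟨p, ⟨hpP, hvp⟩, hwp⟩


/-- Uniform wiggle room for strict constraints. -/
theorem Ctx.strict_nbhd (h : Ctx P V c) {p : E} (W : Finset E) (hW : ↑W ⊆ V)
    (hp : ∀ w ∈ W, -(1/c) < ⟪w, p⟫) :
    ∃ ε : ℝ, 0 < ε ∧ ∀ e : E, ‖e‖ ≤ ε → ∀ w ∈ W, -(1/c) ≤ ⟪w, p + e⟫ := by
  classical
  set S : Finset ℝ := insert (1 : ℝ) (W.image fun w => ⟪w, p⟫ + 1/c) with hS
  have hSne : S.Nonempty := Finset.insert_nonempty _ _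
  set ε : ℝ := S.min' hSne with he
  have hεpos : 0 < ε := by
    rw [he, Finset.lt_min'_iff]
    intro x hx
    rw [hS, Finset.mem_insert] at hx
    rcases hx with rfl | hx
    · norm_num
    · obtain ⟨w, hw, rfl⟩ := Finset.mem_image.1 hx
      have := hp w hw
      linarith
  refine ⟨ε, hεpos, fun e hne w hw => ?_⟩
  have hεle : ε ≤ ⟪w, p⟫ + 1/c := by
    apply Finset.min'_le
    rw [hS, Finset.mem_insert]
    exact Or.inr (Finset.mem_image.2 ⟨w, hw, rfl⟩)
  have hwn : ‖w‖ = 1 := h.norm1 w (hW hw)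
  have habs : |⟪w, e⟫| ≤ ‖w‖ * ‖e‖ := abs_real_inner_le_norm w e
  rw [hwn, one_mul] at habs
  have h1 : -(‖e‖) ≤ ⟪w, e⟫ := (abs_le.1 habs).1
  rw [inner_add_right]
  linarith

/-- The opposite facet has dimension `d`. -/
theorem Ctx.Fface_affDim (h : Ctx P V c) {v : E} (hv : v ∈ V) {d : ℕ}
    (hrank : finrank ℝ E = d + 1) :
    Module.finrank ℝ (vectorSpan ℝ (Fface P c v)) = d := by
  classical
  obtain ⟨p, hpF, hpstrict⟩ := h.exists_strict_point hv
  obtain ⟨ε, hεpos, hε⟩ := h.strict_nbhd (h.fin.toFinset.erase v)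
    (fun w hw => by
      have := Finset.mem_of_mem_erase hw
      rwa [Set.Finite.mem_toFinset] at this)
    (fun w hw => hpstrict w (by
        have := Finset.mem_of_mem_erase hw
        rwa [Set.Finite.mem_toFinset] at this) (Finset.ne_of_mem_erase hw))
  have hmemF : ∀ e : E, ⟪v, e⟫ = 0 → ‖e‖ ≤ ε → p + e ∈ Fface P c v := by
    intro e hev hee
    have hveq : ⟪v, p + e⟫ = -(1/c) := by
      rw [inner_add_right, hev, hpF.2, add_zero]
    refine ⟨?_, hveq⟩
    rw [h.mem_iff]
    intro w hwV
    by_cases hwv : w = v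
    · subst hwv; rw [hveq]
    · exact hε e hee w (Finset.mem_erase.2 ⟨hwv, h.fin.mem_toFinset.2 hwV⟩)
  have hspan : vectorSpan ℝ (Fface P c v) = (ℝ ∙ v)ᗮ := by
    apply le_antisymm
    · rw [vectorSpan_def]
      rw [Submodule.span_le]
      rintro z ⟨x, hx, y, hy, rfl⟩
      rw [SetLike.mem_coe, Submodule.mem_orthogonal_singleton_iff_inner_right]
      have h1 : ⟪v, x⟫ = -(1/c) := hx.2
      have h2 : ⟪v, y⟫ = -(1/c) := hy.2
      change (inner ℝ v (x - y) : ℝ) = 0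
      rw [inner_sub_right, h1, h2, sub_self]
    · intro e he
      rw [Submodule.mem_orthogonal_singleton_iff_inner_right] at he
      by_cases he0 : e = 0
      · simp [he0]
      · set e' : E := (ε/‖e‖) • e with he'
        have hne : ‖e'‖ ≤ ε := by
          rw [he', norm_smul]
          rw [Real.norm_eq_abs, abs_of_pos (div_pos hεpos (norm_pos_iff.2 he0))]
          rw [div_mul_cancel₀ _ (norm_ne_zero_iff.2 he0)]
        have hve' : ⟪v, e'⟫ = 0 := by rw [he', real_inner_smul_right, he, mul_zero]
        have hmem := hmemF e' hve' hne
        have h1 : e' ∈ vectorSpan ℝ (Fface P c v) := by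
          have := vsub_mem_vectorSpan ℝ hmem hpF
          simpa using this
        have h2 : e = (‖e‖/ε) • e' := by
          rw [he', smul_smul]
          have hone : ‖e‖/ε * (ε/‖e‖) = 1 := by
            field_simp [norm_ne_zero_iff.2 he0]
          rw [hone, one_smul]
        rw [h2]
        exact Submodule.smul_mem _ _ h1
  rw [hspan]
  have : Fact (finrank ℝ E = d + 1) := ⟨hrank⟩
  exact Submodule.finrank_orthogonal_span_singleton (h.ne_of_mem hv)

theorem Ctx.Fface_inj (h : Ctx P V c) {v v' : E} (hv : v ∈ V) (hv' : v' ∈ V)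
    (heq : Fface P c v = Fface P c v') : v = v' := by
  by_contra hne
  obtain ⟨p, hpF, hpstrict⟩ := h.exists_strict_point hv'
  rw [← heq] at hpF
  have h1 := hpstrict v hv hne
  rw [hpF.2] at h1
  exact lt_irrefl _ h1


theorem affDim_eq (F : Set E) : affDim F = finrank ℝ (vectorSpan ℝ F) := by
  rw [affDim, direction_affineSpan]

/-- From pointwise strictness we get a single point where all constraints in a
finite family are strict. -/
theorem Ctx.exists_strict_in_face (h : Ctx P V c) {F : Set E} (hFconv : Convex ℝ F)
    (hFP : F ⊆ P) (hFne : F.Nonempty)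
    (hcontra : ∀ v ∈ V, ∃ x ∈ F, ⟪v, x⟫ ≠ -(1/c)) :
    ∃ p ∈ F, ∀ w ∈ V, -(1/c) < ⟪w, p⟫ := by
  classical
  have main : ∀ W : Finset E, ↑W ⊆ V → ∃ p ∈ F, ∀ w ∈ W, -(1/c) < ⟪w, p⟫ := by
    intro W
    induction W using Finset.induction with
    | empty => intro _; exact ⟨hFne.some, hFne.some_mem, by simp⟩
    | @insert a W ha ih =>
      intro hins
      have haV : a ∈ V := hins (Finset.mem_insert_self a W)
      have hWV : ↑W ⊆ V := fun x hx => hins (by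
        rw [Finset.coe_insert]; exact Set.mem_insert_of_mem _ hx)
      obtain ⟨p, hpF, hp⟩ := ih hWV
      obtain ⟨x, hxF, hxa⟩ := hcontra a haV
      have hxa' : -(1/c) < ⟪a, x⟫ :=
        lt_of_le_of_ne (h.inner_ge (h.subsetP haV) (hFP hxF)) (Ne.symm hxa)
      set q : E := (1/2 : ℝ) • p + (1/2 : ℝ) • x with hq
      have hqF : q ∈ F := hFconv hpF hxF (by norm_num) (by norm_num) (by norm_num)
      refine ⟨q, hqF, fun w hw => ?_⟩
      have hwins := Finset.mem_insert.1 hw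
      have hwq : ⟪w, q⟫ = (1/2) * ⟪w, p⟫ + (1/2) * ⟪w, x⟫ := by
        rw [hq, inner_add_right, real_inner_smul_right, real_inner_smul_right]
      rcases hwins with rfl | hwW
      · have h2 : -(1/c) ≤ ⟪w, p⟫ := h.inner_ge (h.subsetP haV) (hFP hpF)
        rw [hwq]; linarith [hxa']
      · have h2 : -(1/c) ≤ ⟪w, x⟫ := h.inner_ge (h.subsetP (hWV hwW)) (hFP hxF)
        have h3 := hp w hwW
        rw [hwq]; linarith
  obtain ⟨p, hpF, hp⟩ := main h.fin.toFinset (by simp)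
  exact ⟨p, hpF, fun w hw => hp w (h.fin.mem_toFinset.2 hw)⟩

/-- The `d`-dimensional faces of `P` are exactly the opposite facets of vertices. -/
theorem Ctx.faceD (h : Ctx P V c) {d : ℕ} (hrank : finrank ℝ E = d + 1)
    (hPdim : affDim P = d + 1) :
    {F : Set E | IsFaceOfDim P F d} = Fface P c '' V := by
  classical
  apply Set.Subset.antisymm
  · rintro F ⟨hFexp, hFne, hFdim⟩
    obtain ⟨l, hl⟩ := hFexp hFne
    have hFP : F ⊆ P := hFexp.subset
    have hFconv : Convex ℝ F := hFexp.convex h.convexP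
    have hsub : ∃ v ∈ V, ∀ x ∈ F, ⟪v, x⟫ = -(1/c) := by
      by_contra hcon
      push_neg at hcon
      obtain ⟨p, hpF, hp⟩ := h.exists_strict_in_face hFconv hFP hFne hcon
      obtain ⟨ε, hεpos, hε⟩ := h.strict_nbhd h.fin.toFinset (by simp)
        (fun w hw => hp w (h.fin.mem_toFinset.1 hw))
      have hball : ∀ e : E, ‖e‖ ≤ ε → p + e ∈ P := by
        intro e hee
        rw [h.mem_iff]
        intro w hwV
        exact hε e hee w (h.fin.mem_toFinset.2 hwV)
      have hpmax : ∀ y ∈ P, l y ≤ l p := by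
        have : p ∈ {x ∈ P | ∀ y ∈ P, l y ≤ l x} := hl ▸ hpF
        exact this.2
      have hl0 : ∀ z : E, l z = 0 := by
        have hle : ∀ z : E, l z ≤ 0 := by
          intro z
          by_contra hz
          push_neg at hz
          have hz0 : z ≠ 0 := by rintro rfl; simp at hz
          set e : E := (ε/‖z‖) • z with he
          have hne : ‖e‖ ≤ ε := by
            rw [he, norm_smul, Real.norm_eq_abs,
              abs_of_pos (div_pos hεpos (norm_pos_iff.2 hz0)),
              div_mul_cancel₀ _ (norm_ne_zero_iff.2 hz0)]
          have hmem := hball e hne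
          have := hpmax _ hmem
          rw [map_add, he, map_smul] at this
          have hpos : 0 < (ε/‖z‖) * l z :=
            mul_pos (div_pos hεpos (norm_pos_iff.2 hz0)) hz
          simp only [smul_eq_mul] at this
          linarith
        intro z
        have h1 := hle z
        have h2 := hle (-z)
        rw [map_neg] at h2
        linarith
      have hFP' : F = P := by
        rw [hl]
        ext x
        simp [hl0]
      rw [hFP'] at hFdim
      rw [hPdim] at hFdim
      omega
    obtain ⟨v, hvV, hvF⟩ := hsub
    have hsubF : F ⊆ Fface P c v := fun x hx => ⟨hFP hx, hvF x hx⟩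
    have hdF : finrank ℝ (vectorSpan ℝ F) = d := by rw [← affDim_eq]; exact hFdim
    have hdFv := h.Fface_affDim hvV hrank
    have heqdir : vectorSpan ℝ F = vectorSpan ℝ (Fface P c v) := by
      apply Submodule.eq_of_le_of_finrank_eq (vectorSpan_mono ℝ hsubF)
      rw [hdF, hdFv]
    obtain ⟨x₀, hx₀F⟩ := hFne
    have heqspan : affineSpan ℝ F = affineSpan ℝ (Fface P c v) := by
      apply AffineSubspace.ext_of_direction_eq
      · rw [direction_affineSpan, direction_affineSpan]; exact heqdir
      · exact ⟨x₀, subset_affineSpan ℝ F hx₀F,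
          subset_affineSpan ℝ _ (hsubF hx₀F)⟩
    have hx₀mem : x₀ ∈ {x ∈ P | ∀ y ∈ P, l y ≤ l x} := hl ▸ hx₀F
    have hconst : ∀ x ∈ affineSpan ℝ F, l x = l x₀ := by
      intro x hx
      refine affineSpan_induction (k := ℝ) (p := fun z => l z = l x₀) hx ?_ ?_
      · intro y hyF
        have hy : y ∈ {x ∈ P | ∀ y ∈ P, l y ≤ l x} := hl ▸ hyF
        exact le_antisymm (hx₀mem.2 y hy.1) (hy.2 x₀ hx₀mem.1)
      · intro a u vv w hu hv hw
        simp only [vsub_eq_sub, vadd_eq_add, map_add, map_smul, map_sub,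
          smul_eq_mul, hu, hv, hw]
        ring
    refine ⟨v, hvV, ?_⟩
    apply Set.Subset.antisymm _ hsubF
    intro x hx
    have hxspan : x ∈ affineSpan ℝ F := by
      rw [heqspan]
      exact subset_affineSpan ℝ _ hx
    have hxl : l x = l x₀ := hconst x hxspan
    rw [hl]
    exact ⟨hx.1, fun y hy => hxl ▸ hx₀mem.2 y hy⟩
  · rintro F ⟨v, hvV, rfl⟩
    exact ⟨h.Fface_isExposed hvV, h.Fface_nonempty hvV,
      by rw [affDim_eq]; exact h.Fface_affDim hvV hrank⟩


/-- The `0`-dimensional faces of `P` are exactly the vertex singletons. -/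
theorem Ctx.face0 (h : Ctx P V c) :
    {F : Set E | IsFaceOfDim P F 0} = (fun v => ({v} : Set E)) '' V := by
  classical
  apply Set.Subset.antisymm
  · rintro F ⟨hFexp, hFne, hFdim⟩
    obtain ⟨x₀, hx₀⟩ := hFne
    have hdir : vectorSpan ℝ F = ⊥ := by
      rw [affDim_eq] at hFdim
      exact Submodule.finrank_eq_zero.1 hFdim
    have hsingle : F = {x₀} := by
      apply Set.Subset.antisymm
      · intro x hx
        have : x -ᵥ x₀ ∈ vectorSpan ℝ F := vsub_mem_vectorSpan ℝ hx hx₀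
        rw [hdir, Submodule.mem_bot, vsub_eq_sub, sub_eq_zero] at this
        simp [this]
      · intro x hx
        rw [Set.mem_singleton_iff] at hx
        rw [hx]; exact hx₀
    have hext : x₀ ∈ Set.extremePoints ℝ P := by
      rw [hsingle] at hFexp
      exact hFexp.isExtreme.mem_extremePoints
    exact ⟨x₀, h.hV ▸ hext, hsingle.symm⟩
  · rintro F ⟨v, hvV, rfl⟩
    obtain ⟨u, hu⟩ := h.exists_sep hvV
    have humax : ∀ y ∈ P, ⟪u, y⟫ ≤ ⟪u, v⟫ := by
      intro y hy
      rw [h.hull] at hy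
      refine inner_le_hull (fun w hw => ?_) hy
      by_cases hwv : w = v
      · subst hwv; exact le_refl _
      · exact le_of_lt (hu w (subset_convexHull ℝ _ (Set.mem_union_left _ ⟨hw, hwv⟩)))
    have hmaxv : ∀ x ∈ P, (∀ y ∈ P, ⟪u, y⟫ ≤ ⟪u, x⟫) → x = v := by
      intro x hxP hxmax
      have hxv : ⟪u, x⟫ = ⟪u, v⟫ :=
        le_antisymm (humax x hxP) (hxmax v (h.subsetP hvV))
      rcases Set.eq_empty_or_nonempty (V \ {v}) with hVv | hVv
      · have hVeq : V = {v} := by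
          apply Set.Subset.antisymm
          · intro w hw
            by_contra hwv
            exact Set.eq_empty_iff_forall_notMem.1 hVv w ⟨hw, hwv⟩
          · intro w hw
            rw [Set.mem_singleton_iff] at hw
            rw [hw]; exact hvV
        have : P = {v} := by rw [h.hull, hVeq, convexHull_singleton]
        rw [this] at hxP
        exact hxP
      · have hins : insert v (V \ {v}) = V := by
          rw [Set.insert_diff_singleton, Set.insert_eq_self.2 hvV]
        have hxins : x ∈ convexHull ℝ (insert v (V \ {v})) := by
          rw [hins, ← h.hull]; exact hxP
        rw [convexHull_insert hVv] at hxins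
        obtain ⟨v', hv', hxseg0⟩ := Set.mem_iUnion₂.1 hxins
        obtain ⟨z, hz, hxseg⟩ := Set.mem_iUnion₂.1 hxseg0
        rw [Set.mem_singleton_iff] at hv'
        rw [hv'] at hxseg
        rw [segment_eq_image] at hxseg
        obtain ⟨t, ⟨ht0, ht1⟩, hxab⟩ := hxseg
        set a : ℝ := 1 - t with hadef2
        set b : ℝ := t with hbdef2
        have ha : 0 ≤ a := by rw [hadef2]; linarith
        have hb : 0 ≤ b := ht0
        have hab : a + b = 1 := by simp [hadef2, hbdef2]
        have hxab' : a • v + b • z = x := by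
          rw [← hxab, hadef2]
        have hzC : z ∈ convexHull ℝ ((V \ {v}) ∪ {0}) :=
          convexHull_mono Set.subset_union_left hz
        have hzlt : ⟪u, z⟫ < ⟪u, v⟫ := hu z hzC
        have hexp : ⟪u, x⟫ = a * ⟪u, v⟫ + b * ⟪u, z⟫ := by
          rw [← hxab', inner_add_right, real_inner_smul_right, real_inner_smul_right]
        by_cases hb0 : b = 0
        · subst hb0
          have ha1 : a = 1 := by linarith
          rw [← hxab', ha1, one_smul, zero_smul, add_zero]
        · have hbpos : 0 < b := lt_of_le_of_ne hb (Ne.symm hb0)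
          exfalso
          rw [hexp] at hxv
          have hU : a * ⟪u, v⟫ + b * ⟪u, v⟫ = ⟪u, v⟫ := by
            rw [← add_mul, hab, one_mul]
          have hbz := mul_lt_mul_of_pos_left hzlt hbpos
          linarith
    have hsingleton_eq : ({v} : Set E) =
        {x | x ∈ P ∧ ∀ y ∈ P, (innerSL ℝ u) y ≤ (innerSL ℝ u) x} := by
      ext x
      simp only [Set.mem_singleton_iff, Set.mem_setOf_eq, innerSL_apply_apply]
      constructor
      · rintro rfl
        exact ⟨h.subsetP hvV, humax⟩
      · rintro ⟨hxP, hxmax⟩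
        exact hmaxv x hxP hxmax
    refine ⟨fun _ => ⟨innerSL ℝ u, hsingleton_eq⟩, ⟨v, rfl⟩, ?_⟩
    rw [affDim_eq, vectorSpan_singleton]
    exact finrank_bot ℝ E


theorem Ctx.dist_vertex (h : Ctx P V c) {v w : E} (hv : v ∈ V) (hw : w ∈ V) :
    dist v w = Real.sqrt (2 - 2*⟪v, w⟫) := by
  have h2 : ‖v - w‖^2 = 2 - 2*⟪v, w⟫ := by
    rw [norm_sub_sq_real, h.norm1 v hv, h.norm1 w hw]; ring
  rw [dist_eq_norm, ← h2, Real.sqrt_sq (norm_nonneg _)]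

theorem Ctx.diam_eq (h : Ctx P V c) : Metric.diam P = Real.sqrt (2 + 2*(1/c)) := by
  apply le_antisymm
  · apply Metric.diam_le_of_forall_dist_le (Real.sqrt_nonneg _)
    intro x hx y hy
    have hx1 : ‖x‖ ≤ 1 := h.norm_le_one hx
    have hy1 : ‖y‖ ≤ 1 := h.norm_le_one hy
    have hin : -(1/c) ≤ ⟪x, y⟫ := h.inner_ge hx hy
    have hsq : dist x y ^ 2 ≤ 2 + 2*(1/c) := by
      rw [dist_eq_norm, norm_sub_sq_real]
      nlinarith [norm_nonneg x, norm_nonneg y]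
    rw [← Real.sqrt_sq dist_nonneg]
    exact Real.sqrt_le_sqrt hsq
  · obtain ⟨v, hv⟩ := h.V_nonempty
    obtain ⟨w, hwV, hw⟩ := h.exists_antipodal hv
    have hd : dist v w = Real.sqrt (2 + 2*(1/c)) := by
      rw [h.dist_vertex hv hwV, hw]
      congr 1
      ring
    rw [← hd]
    exact Metric.dist_le_diam_of_mem h.compactP.isBounded (h.subsetP hv) (h.subsetP hwV)

theorem Ctx.dist_eq_diam_iff (h : Ctx P V c) {v w : E} (hv : v ∈ V) (hw : w ∈ V) :
    dist v w = Metric.diam P ↔ ⟪v, w⟫ = -(1/c) := by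
  rw [h.dist_vertex hv hw, h.diam_eq]
  have hle1 : ⟪v, w⟫ ≤ 1 := by
    have := real_inner_le_norm v w
    rwa [h.norm1 v hv, h.norm1 w hw, one_mul] at this
  have hnn1 : (0:ℝ) ≤ 2 - 2*⟪v, w⟫ := by linarith
  have hnn2 : (0:ℝ) ≤ 2 + 2*(1/c) := by
    have : 0 < 1/c := one_div_pos.2 h.cpos
    linarith
  rw [Real.sqrt_inj hnn1 hnn2]
  constructor
  · intro h'; linarith
  · intro h'; rw [h']; ring

theorem Ctx.ne_of_antipodal (h : Ctx P V c) {v w : E} (hv : v ∈ V)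
    (hvw : ⟪v, w⟫ = -(1/c)) : v ≠ w := by
  rintro rfl
  rw [real_inner_self_eq_norm_sq, h.norm1 v hv] at hvw
  have : 0 < 1/c := one_div_pos.2 h.cpos
  rw [one_div] at this
  norm_num at hvw
  linarith


theorem Ctx.main (h : Ctx P V c) {d : ℕ} (hrank : finrank ℝ E = d + 1)
    (hPdim : affDim P = d + 1) :
    fPair P 0 d = 2 * (diamEdges P).ncard := by
  classical
  set Df : Finset (E × E) :=
    (h.fin.toFinset ×ˢ h.fin.toFinset).filter (fun p => ⟪p.1, p.2⟫ = -(1/c)) with hDf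
  have hDmem : ∀ p : E × E, p ∈ Df ↔ p.1 ∈ V ∧ p.2 ∈ V ∧ ⟪p.1, p.2⟫ = -(1/c) := by
    intro p
    simp [hDf, Finset.mem_filter, Finset.mem_product, h.fin.mem_toFinset, and_assoc]
  -- the incidence set is the image of `Df`
  have hI : {p : Set E × Set E | IsFaceOfDim P p.1 0 ∧ IsFaceOfDim P p.2 d ∧ p.1 ⊆ p.2}
      = (fun q : E × E => (({q.1} : Set E), Fface P c q.2)) '' (↑Df : Set (E × E)) := by
    ext p
    constructor
    · rintro ⟨h0, hd, hsub⟩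
      have h0' : p.1 ∈ (fun v => ({v} : Set E)) '' V := by
        rw [← h.face0]; exact h0
      obtain ⟨v, hvV, hveq⟩ := h0'
      have hd' : p.2 ∈ Fface P c '' V := by
        rw [← h.faceD hrank hPdim]; exact hd
      obtain ⟨w, hwV, hweq⟩ := hd'
      have hv1 : v ∈ p.1 := by rw [← hveq]; exact Set.mem_singleton v
      have hv2 : v ∈ Fface P c w := by rw [hweq]; exact hsub hv1
      refine ⟨(v, w), ?_, ?_⟩
      · rw [Finset.mem_coe, hDmem]
        exact ⟨hvV, hwV, by rw [real_inner_comm]; exact hv2.2⟩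
      · simp only [Prod.ext_iff]
        exact ⟨hveq, hweq⟩
    · rintro ⟨q, hq, rfl⟩
      rw [Finset.mem_coe, hDmem] at hq
      obtain ⟨hq1, hq2, hq3⟩ := hq
      refine ⟨?_, ?_, ?_⟩
      · show IsFaceOfDim P ({q.1} : Set E) 0
        have : ({q.1} : Set E) ∈ {F : Set E | IsFaceOfDim P F 0} := by
          rw [h.face0]; exact ⟨q.1, hq1, rfl⟩
        exact this
      · show IsFaceOfDim P (Fface P c q.2) d
        have : Fface P c q.2 ∈ {F : Set E | IsFaceOfDim P F d} := by
          rw [h.faceD hrank hPdim]; exact ⟨q.2, hq2, rfl⟩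
        exact this
      · intro x hx
        rw [Set.mem_singleton_iff] at hx
        subst hx
        exact ⟨h.subsetP hq1, by rw [real_inner_comm]; exact hq3⟩
  have hinj : Set.InjOn (fun q : E × E => (({q.1} : Set E), Fface P c q.2))
      (↑Df : Set (E × E)) := by
    intro a ha b hb hab
    rw [Finset.mem_coe, hDmem] at ha hb
    simp only [Prod.ext_iff] at hab
    have h1 : a.1 = b.1 := Set.singleton_eq_singleton_iff.1 hab.1
    have h2 : a.2 = b.2 := h.Fface_inj ha.2.1 hb.2.1 hab.2
    exact Prod.ext h1 h2
  have hcount1 : fPair P 0 d = Df.card := by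
    have hrfl : fPair P 0 d =
        {p : Set E × Set E | IsFaceOfDim P p.1 0 ∧ IsFaceOfDim P p.2 d ∧ p.1 ⊆ p.2}.ncard := rfl
    rw [hrfl, hI, Set.ncard_image_of_injOn hinj, Set.ncard_coe_finset]
  -- the set of diameter edges is the image of `Df`
  have hE : diamEdges P = (fun q : E × E => ({q.1, q.2} : Set E)) '' (↑Df : Set (E × E)) := by
    ext e
    constructor
    · rintro ⟨v, w, hv, hw, hvw, hdist, rfl⟩
      rw [← h.hV] at hv hw
      have hip : ⟪v, w⟫ = -(1/c) := (h.dist_eq_diam_iff hv hw).1 hdist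
      exact ⟨(v, w), by rw [Finset.mem_coe, hDmem]; exact ⟨hv, hw, hip⟩, rfl⟩
    · rintro ⟨q, hq, rfl⟩
      rw [Finset.mem_coe, hDmem] at hq
      obtain ⟨h1, h2, h3⟩ := hq
      refine ⟨q.1, q.2, ?_, ?_, h.ne_of_antipodal h1 h3,
        (h.dist_eq_diam_iff h1 h2).2 h3, rfl⟩
      · rw [← h.hV]; exact h1
      · rw [← h.hV]; exact h2
  set Ef : Finset (Set E) := Df.image (fun q : E × E => ({q.1, q.2} : Set E)) with hEf
  have hE2 : (diamEdges P).ncard = Ef.card := by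
    rw [hE, hEf, ← Finset.coe_image, Set.ncard_coe_finset]
  have hdouble : Df.card = 2 * Ef.card := by
    rw [Finset.card_eq_sum_card_image (fun q : E × E => ({q.1, q.2} : Set E)) Df]
    have hfib : ∀ b ∈ Df.image (fun q : E × E => ({q.1, q.2} : Set E)),
        (Df.filter fun a => ({a.1, a.2} : Set E) = b).card = 2 := by
      intro b hb
      obtain ⟨q, hq, rfl⟩ := Finset.mem_image.1 hb
      obtain ⟨h1, h2, h3⟩ := (hDmem q).1 hq
      have hne : q.1 ≠ q.2 := h.ne_of_antipodal h1 h3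
      have hswap : (q.2, q.1) ∈ Df :=
        (hDmem _).2 ⟨h2, h1, by rw [real_inner_comm]; exact h3⟩
      have hfib2 : Df.filter (fun a => ({a.1, a.2} : Set E) = {q.1, q.2})
          = {(q.1, q.2), (q.2, q.1)} := by
        ext a
        simp only [Finset.mem_filter, Finset.mem_insert, Finset.mem_singleton]
        constructor
        · rintro ⟨haD, haeq⟩
          rcases Set.pair_eq_pair_iff.1 haeq with ⟨e1, e2⟩ | ⟨e1, e2⟩
          · left; exact Prod.ext e1 e2
          · right; exact Prod.ext e1 e2
        · rintro (ha | ha)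
          · subst ha
            exact ⟨by simpa using hq, rfl⟩
          · subst ha
            exact ⟨hswap, Set.pair_comm _ _⟩
      rw [hfib2]
      rw [Finset.card_insert_of_notMem, Finset.card_singleton]
      simp only [Finset.mem_singleton, Prod.ext_iff, not_and]
      intro h'
      exact absurd h' hne
    rw [Finset.sum_congr rfl hfib, Finset.sum_const, smul_eq_mul, mul_comm, ← hEf]
  rw [hcount1, hE2, hdouble]

end ASPaux

/-- For an anti-self-polar polytope `P` of dimension `d + 1`,
`f₀d(P) = 2·e(G(P))`, where `e(G(P))` is the number of edges of the diameter graph. -/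
theorem fPair_eq_two_mul_diamEdges {d : ℕ} (P : Set (EuclideanSpace ℝ (Fin (d + 1))))
    (hpoly : IsPolytope P) (hdim : affDim P = d + 1) (hasp : IsAntiSelfPolar P) :
    fPair P 0 d = 2 * (diamEdges P).ncard := by
  obtain ⟨S, hS⟩ := hpoly
  obtain ⟨hnorm, c, hc, hpolar⟩ := hasp
  set V : Set (EuclideanSpace ℝ (Fin (d + 1))) := Set.extremePoints ℝ P with hV
  have hcomp : IsCompact P := hS ▸ S.finite_toSet.isCompact_convexHull ℝ
  have hconv : Convex ℝ P := hS ▸ convex_convexHull ℝ _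
  have hVfin : V.Finite := by
    apply Set.Finite.subset S.finite_toSet
    rw [hV, hS]
    exact extremePoints_convexHull_subset
  have hhull : P = convexHull ℝ V := by
    have h1 := closure_convexHull_extremePoints hcomp hconv
    have h2 : IsClosed (convexHull ℝ V) := (hVfin.isCompact_convexHull ℝ).isClosed
    rw [← h1, hV, h2.closure_eq]
  have ctx : ASPaux.Ctx P V c :=
    ⟨hV, hVfin, hhull, fun v hv => hnorm v (hV ▸ hv), hc, hpolar⟩
  exact ctx.main finrank_euclideanSpace_fin hdim
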